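/- Let δ ∈ [0, 1/2], ε > 0, T̂ and T be random variables, and Z ~ N(0,1). Then d_K(T̂, Z) ≤ d_K(T, Z) + (1/2)(δ + ε) + P(|T̂ - T| ≥ δ·T + ε), where d_K is the Kolmogorov distance. -/

import Mathlib

open MeasureTheory ProbabilityTheory Real

/-- Kolmogorov distance of a real random variable to the standard normal. -/
noncomputable def kolDistGaussian {Ω : Type*} [MeasurableSpace Ω]
    (μ : Measure Ω) (X : Ω → ℝ) : ℝ :=
  ⨆ t : ℝ, |(μ {ω | X ω ≤ t}).toReal - ((gaussianReal 0 1) (Set.Iic t)).toReal|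

namespace KolAux

noncomputable def Phi (t : ℝ) : ℝ := ((gaussianReal 0 1) (Set.Iic t)).toReal

noncomputable def pdf (x : ℝ) : ℝ := gaussianPDFReal 0 1 x

lemma pdf_nonneg (x : ℝ) : 0 ≤ pdf x := gaussianPDFReal_nonneg 0 1 x

lemma pdf_eq (x : ℝ) : pdf x = (Real.sqrt (2 * π))⁻¹ * Real.exp (-x ^ 2 / 2) := by
  simp [pdf, gaussianPDFReal]

lemma pdf_le (x : ℝ) : pdf x ≤ (Real.sqrt (2 * π))⁻¹ := by
  rw [pdf_eq]
  have h1 : Real.exp (-x ^ 2 / 2) ≤ 1 := by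
    rw [Real.exp_le_one_iff]
    nlinarith [sq_nonneg x]
  have h2 : (0:ℝ) < (Real.sqrt (2 * π))⁻¹ := by
    positivity
  nlinarith

lemma pdf_anti {a b : ℝ} (ha : 0 ≤ a) (hab : a ≤ b) : pdf b ≤ pdf a := by
  rw [pdf_eq, pdf_eq]
  have h2 : (0:ℝ) < (Real.sqrt (2 * π))⁻¹ := by positivity
  have : Real.exp (-b ^ 2 / 2) ≤ Real.exp (-a ^ 2 / 2) := by
    apply Real.exp_le_exp.2
    nlinarith
  nlinarith

lemma sqrt_two_pi_ge_two : (2:ℝ) ≤ Real.sqrt (2 * π) := by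
  have : (4:ℝ) ≤ 2 * π := by nlinarith [Real.pi_gt_three]
  nlinarith [Real.sq_sqrt (by positivity : (0:ℝ) ≤ 2 * π),
    Real.sqrt_nonneg (2 * π)]

lemma inv_sqrt_two_pi_le' : (Real.sqrt (2 * π))⁻¹ ≤ 1 / 2 := by
  have h := sqrt_two_pi_ge_two
  have h2 : (Real.sqrt (2 * π))⁻¹ ≤ (2:ℝ)⁻¹ := inv_anti₀ two_pos h
  linarith

lemma sqrt_two_pi_ge : (2.5:ℝ) ≤ Real.sqrt (2 * π) := by
  have hpi := Real.pi_gt_d6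
  nlinarith [Real.sq_sqrt (by positivity : (0:ℝ) ≤ 2 * π),
    Real.sqrt_nonneg (2 * π)]

lemma inv_sqrt_two_pi_le'' : (Real.sqrt (2 * π))⁻¹ ≤ (0.4:ℝ) := by
  have h := sqrt_two_pi_ge
  have h2 : (Real.sqrt (2 * π))⁻¹ ≤ ((2.5:ℝ))⁻¹ :=
    inv_anti₀ (by norm_num) h
  norm_num at h2 ⊢
  linarith
/-- `t * pdf t ≤ 1/4` for `t ≥ 0`. -/
lemma mul_pdf_le {t : ℝ} (ht : 0 ≤ t) : t * pdf t ≤ 1 / 4 := by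
  rw [pdf_eq]
  -- t * exp (-t^2/2) ≤ exp (-1/2)
  have h1 : t * Real.exp (-t ^ 2 / 2) ≤ Real.exp (-(1:ℝ) / 2) := by
    have h2 : (t ^ 2 + 1) / 2 ≤ Real.exp ((t ^ 2 - 1) / 2) := by
      have := Real.add_one_le_exp ((t ^ 2 - 1) / 2)
      linarith
    have h3 : t ≤ (t ^ 2 + 1) / 2 := by nlinarith [sq_nonneg (t - 1)]
    have h4 : t ≤ Real.exp ((t ^ 2 - 1) / 2) := h3.trans h2
    have h5 : (0:ℝ) < Real.exp (-t ^ 2 / 2) := Real.exp_pos _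
    calc t * Real.exp (-t ^ 2 / 2)
        ≤ Real.exp ((t ^ 2 - 1) / 2) * Real.exp (-t ^ 2 / 2) := by nlinarith
      _ = Real.exp (-(1:ℝ) / 2) := by
          rw [← Real.exp_add]; ring_nf
  -- exp(-1/2) * (√(2π))⁻¹ ≤ 1/4 since 2πe ≥ 16
  have he : Real.exp (-(1:ℝ) / 2) ≤ (0.607 : ℝ) := by
    rw [show (-(1:ℝ)/2) = -(1/2) by ring, Real.exp_neg]
    have h6 : (1.648 : ℝ) ≤ Real.exp (1 / 2) := by
      have h7 : ((1.648 : ℝ)) ^ 2 ≤ Real.exp (1 / 2) ^ 2 := by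
        rw [← Real.exp_nat_mul]
        have : ((2:ℕ):ℝ) * (1/2) = 1 := by norm_num
        rw [this]
        nlinarith [Real.exp_one_gt_d9]
      nlinarith [Real.exp_pos (1/2 : ℝ)]
    rw [inv_le_comm₀ (by positivity) (by norm_num)]
    linarith
  have hs : (0:ℝ) < Real.sqrt (2 * π) := lt_of_lt_of_le two_pos sqrt_two_pi_ge_two
  have hinv : (Real.sqrt (2 * π))⁻¹ ≤ (0.4:ℝ) := inv_sqrt_two_pi_le''
  have hinv0 : (0:ℝ) ≤ (Real.sqrt (2 * π))⁻¹ := by positivity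
  have hp : 0 ≤ t * Real.exp (-t ^ 2 / 2) := by positivity
  have h8 : (Real.sqrt (2 * π))⁻¹ * (t * Real.exp (-t ^ 2 / 2))
      ≤ (0.4:ℝ) * (0.607 : ℝ) :=
    mul_le_mul hinv (h1.trans he) hp (by norm_num)
  calc t * ((Real.sqrt (2 * π))⁻¹ * Real.exp (-t ^ 2 / 2))
      = (Real.sqrt (2 * π))⁻¹ * (t * Real.exp (-t ^ 2 / 2)) := by ring
    _ ≤ (0.4:ℝ) * (0.607 : ℝ) := h8
    _ ≤ 1 / 4 := by norm_num

lemma Phi_eq (t : ℝ) : Phi t = ∫ x in Set.Iic t, pdf x := by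
  rw [Phi, gaussianReal_apply_eq_integral 0 one_ne_zero, ENNReal.toReal_ofReal]
  · rfl
  · exact setIntegral_nonneg measurableSet_Iic fun x _ => gaussianPDFReal_nonneg _ _ _

lemma Phi_diff {a b : ℝ} (h : a ≤ b) :
    Phi b - Phi a = ∫ x in Set.Ioc a b, pdf x := by
  have h2 : (∫ x in Set.Iic a, pdf x) + ∫ x in Set.Ioc a b, pdf x
      = ∫ x in Set.Iic b, pdf x := by
    simp only [pdf]
    rw [← setIntegral_union (Set.Iic_disjoint_Ioc le_rfl) measurableSet_Ioc
        ((integrable_gaussianPDFReal 0 1).integrableOn)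
        ((integrable_gaussianPDFReal 0 1).integrableOn),
      Set.Iic_union_Ioc_eq_Iic h]
  rw [Phi_eq, Phi_eq]
  linarith

lemma Phi_mono {a b : ℝ} (h : a ≤ b) : Phi a ≤ Phi b := by
  have := Phi_diff h
  have h2 : 0 ≤ ∫ x in Set.Ioc a b, pdf x :=
    setIntegral_nonneg measurableSet_Ioc fun x _ => pdf_nonneg x
  linarith

lemma integral_Ioc_le {a b : ℝ} (h : a ≤ b) {c : ℝ} (hc : 0 ≤ c)
    (hpdf : ∀ x ∈ Set.Ioc a b, pdf x ≤ c) :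
    ∫ x in Set.Ioc a b, pdf x ≤ (b - a) * c := by
  calc ∫ x in Set.Ioc a b, pdf x
      ≤ ∫ _ in Set.Ioc a b, c := by
        apply setIntegral_mono_on ((integrable_gaussianPDFReal 0 1).integrableOn)
          (integrableOn_const measure_Ioc_lt_top.ne)
          measurableSet_Ioc hpdf
    _ = (b - a) * c := by
        simp [Measure.restrict_apply, Real.volume_Ioc, ENNReal.toReal_ofReal,
          sub_nonneg.2 h]

lemma Phi_lip {a b : ℝ} (h : a ≤ b) : Phi b - Phi a ≤ (b - a) * (1 / 2) := by
  rw [Phi_diff h]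
  have h1 : ∫ x in Set.Ioc a b, pdf x ≤ (b - a) * (Real.sqrt (2 * π))⁻¹ :=
    integral_Ioc_le h (by positivity) fun x _ => pdf_le x
  have h2 : (b - a) * (Real.sqrt (2 * π))⁻¹ ≤ (b - a) * (1 / 2) :=
    mul_le_mul_of_nonneg_left inv_sqrt_two_pi_le' (by linarith)
  linarith

/-- Multiplicative perturbation bound. -/
lemma Phi_scale {t β : ℝ} (hβ : 1 ≤ β) : Phi (β * t) - Phi t ≤ (β - 1) * (1 / 4) := by
  rcases le_or_gt t 0 with ht | ht
  · have h1 : β * t ≤ t := by nlinarith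
    have := Phi_mono h1
    nlinarith
  · have h1 : t ≤ β * t := by nlinarith
    rw [Phi_diff h1]
    have h2 : ∫ x in Set.Ioc t (β * t), pdf x ≤ (β * t - t) * pdf t :=
      integral_Ioc_le h1 (pdf_nonneg t) fun x hx => pdf_anti ht.le hx.1.le
    have h3 : (β * t - t) * pdf t = (β - 1) * (t * pdf t) := by ring
    have h4 := mul_pdf_le ht.le
    have h5 : (β - 1) * (t * pdf t) ≤ (β - 1) * (1 / 4) :=
      mul_le_mul_of_nonneg_left h4 (by linarith)
    linarith

end KolAux

/-- For `δ ∈ [0, 1/2]`, `ε > 0`, random variables `T̂, T` and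
`Z ~ N(0,1)`:
`d_K(T̂, Z) ≤ d_K(T, Z) + (1/2)(δ + ε) + P(|T̂ - T| ≥ δ T + ε)`. -/
theorem kolDist_perturb {Ω : Type*} [MeasurableSpace Ω]
    (μ : Measure Ω) [IsProbabilityMeasure μ] (That T : Ω → ℝ)
    (δ ε : ℝ) (hδ0 : 0 ≤ δ) (hδ : δ ≤ 1 / 2) (hε : 0 < ε) :
    kolDistGaussian μ That
      ≤ kolDistGaussian μ T + (1 / 2) * (δ + ε)
        + (μ {ω | |That ω - T ω| ≥ δ * T ω + ε}).toReal := by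
  classical
  set B : Set Ω := {ω | |That ω - T ω| ≥ δ * T ω + ε} with hB
  set pB : ℝ := (μ B).toReal with hpB
  set dK : ℝ := kolDistGaussian μ T with hdK
  have hδ1 : (0:ℝ) < 1 - δ := by linarith
  -- generic facts
  have hFin : ∀ s : Set Ω, μ s ≠ ⊤ := fun s => measure_ne_top μ s
  have hF01 : ∀ (X : Ω → ℝ) (t : ℝ), (μ {ω | X ω ≤ t}).toReal ≤ 1 := by
    intro X t
    rw [← ENNReal.toReal_one]
    exact ENNReal.toReal_mono (by simp) prob_le_one
  have hF0 : ∀ (X : Ω → ℝ) (t : ℝ), 0 ≤ (μ {ω | X ω ≤ t}).toReal :=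
    fun X t => ENNReal.toReal_nonneg
  have hPhi01 : ∀ t : ℝ, KolAux.Phi t ≤ 1 := by
    intro t
    rw [KolAux.Phi, ← ENNReal.toReal_one]
    exact ENNReal.toReal_mono (by simp) prob_le_one
  have hPhi0 : ∀ t : ℝ, 0 ≤ KolAux.Phi t := fun t => ENNReal.toReal_nonneg
  -- dK bounds each individual deviation
  have hbdd : BddAbove (Set.range fun t : ℝ =>
      |(μ {ω | T ω ≤ t}).toReal - ((gaussianReal 0 1) (Set.Iic t)).toReal|) := by
    refine ⟨1, ?_⟩
    rintro x ⟨t, rfl⟩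
    rw [abs_sub_le_iff]
    constructor
    · have h1 := hF01 T t
      have h2 : (0:ℝ) ≤ ((gaussianReal 0 1) (Set.Iic t)).toReal := ENNReal.toReal_nonneg
      linarith
    · have h1 : ((gaussianReal 0 1) (Set.Iic t)).toReal ≤ 1 := hPhi01 t
      have h2 := hF0 T t
      linarith
  have hdK_le : ∀ s : ℝ, |(μ {ω | T ω ≤ s}).toReal - KolAux.Phi s| ≤ dK := by
    intro s
    exact le_ciSup hbdd s
  -- subadditivity helper
  have hsub : ∀ (A C : Set Ω), A ⊆ C ∪ B →
      (μ A).toReal ≤ (μ C).toReal + pB := by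
    intro A C hAC
    have h1 : μ A ≤ μ C + μ B := (measure_mono hAC).trans (measure_union_le C B)
    have h2 := ENNReal.toReal_mono (by simp [ENNReal.add_ne_top, hFin]) h1
    rwa [ENNReal.toReal_add (hFin C) (hFin B)] at h2
  -- pointwise bound
  rw [kolDistGaussian]
  apply ciSup_le
  intro t
  rw [abs_sub_le_iff]
  have hpB0 : 0 ≤ pB := ENNReal.toReal_nonneg
  constructor
  · -- upper direction
    set s₁ : ℝ := (t + ε) / (1 - δ) with hs₁
    have hincl : {ω | That ω ≤ t} ⊆ {ω | T ω ≤ s₁} ∪ B := by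
      intro ω hω
      by_cases hωB : ω ∈ B
      · exact Or.inr hωB
      · left
        simp only [hB, Set.mem_setOf_eq, not_le, ge_iff_le] at hωB ⊢
        have h1 : T ω - That ω ≤ |That ω - T ω| := by
          rw [abs_sub_comm]; exact le_abs_self _
        have h2 : (1 - δ) * T ω ≤ t + ε := by
          have : That ω ≤ t := hω
          nlinarith
        rw [hs₁, le_div_iff₀ hδ1]
        linarith
    have h1 : (μ {ω | That ω ≤ t}).toReal ≤ (μ {ω | T ω ≤ s₁}).toReal + pB :=
      hsub _ _ hincl
    have h2 : (μ {ω | T ω ≤ s₁}).toReal - KolAux.Phi s₁ ≤ dK :=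
      (le_abs_self _).trans (hdK_le s₁)
    -- Phi s₁ - Phi t ≤ (1/2)(δ+ε)
    have hβ : s₁ = (1 - δ)⁻¹ * (t + ε) := by rw [hs₁]; ring
    have hβ1 : (1:ℝ) ≤ (1 - δ)⁻¹ := by
      rw [le_inv_comm₀ one_pos hδ1]; linarith
    have hβ2 : (1 - δ)⁻¹ ≤ 2 := by
      rw [inv_le_comm₀ hδ1 two_pos]; linarith
    have h3 : KolAux.Phi s₁ - KolAux.Phi (t + ε) ≤ ((1 - δ)⁻¹ - 1) * (1 / 4) := by
      rw [hβ]; exact KolAux.Phi_scale hβ1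
    have h4 : KolAux.Phi (t + ε) - KolAux.Phi t ≤ (t + ε - t) * (1 / 2) :=
      KolAux.Phi_lip (by linarith)
    have h5 : ((1 - δ)⁻¹ - 1) * (1 / 4) ≤ δ / 2 := by
      have hc : (1 - δ)⁻¹ * (1 - δ) = 1 := inv_mul_cancel₀ (ne_of_gt hδ1)
      nlinarith [hc, hδ1, hδ0, hδ, hβ1]
    simp only [KolAux.Phi] at h2 h3 h4
    linarith
  · -- lower direction
    set s₂ : ℝ := (t - ε) / (1 + δ) with hs₂
    have hδ2 : (0:ℝ) < 1 + δ := by linarith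
    have hts : (1 + δ) * s₂ = t - ε := by
      rw [hs₂]; field_simp
    have hincl : {ω | T ω ≤ s₂} ⊆ {ω | That ω ≤ t} ∪ B := by
      intro ω hω
      by_cases hωB : ω ∈ B
      · exact Or.inr hωB
      · left
        simp only [hB, Set.mem_setOf_eq, not_le, ge_iff_le] at hωB ⊢
        have h1 : That ω - T ω ≤ |That ω - T ω| := le_abs_self _
        have h2 : T ω ≤ s₂ := hω
        nlinarith
    have h1 : (μ {ω | T ω ≤ s₂}).toReal ≤ (μ {ω | That ω ≤ t}).toReal + pB :=
      hsub _ _ hincl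
    have h2 : KolAux.Phi s₂ - (μ {ω | T ω ≤ s₂}).toReal ≤ dK := by
      have := hdK_le s₂
      rw [abs_sub_le_iff] at this
      exact this.2
    have hβ1 : (1:ℝ) ≤ 1 + δ := by linarith
    have h3 : KolAux.Phi ((1 + δ) * s₂) - KolAux.Phi s₂ ≤ ((1 + δ) - 1) * (1 / 4) :=
      KolAux.Phi_scale hβ1
    have h4 : KolAux.Phi t - KolAux.Phi ((1 + δ) * s₂) ≤ (t - (1 + δ) * s₂) * (1 / 2) := by
      apply KolAux.Phi_lip; rw [hts]; linarith
    rw [hts] at h3 h4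
    have h5 : ((1 + δ) - 1) * (1 / 4) ≤ δ / 2 := by nlinarith
    simp only [KolAux.Phi] at h2 h3 h4
    linarith
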